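/- Let H be a real Hilbert space, let I be a countable index set, and for each i ∈ I let T_i : H → H be a cutter with C_i := Fix T_i and C := ⋂_{i ∈ I} C_i. Let Q ⊆ H be nonempty, closed and convex with int(C) ∩ Q ≠ ∅. Let (Ω, F, P) be a probability space and {I_k}_{k=0}^∞ a random control sequence in I (i.i.d. I_k : Ω → 2^I \ {∅} with sup_{ω,k} #(I_k(ω)) < ∞) such that P({ω : I_k(ω) ∩ I_+(x) ≠ ∅}) > 0 for every x ∉ C, where I_+(x) := {i : x ∉ C_i}. For each ω define x_0(ω) := x_0 ∈ Q and x_{k+1}(ω) := P_Q( x_k(ω) + α_{[k]} Σ_{i ∈ I_k(ω)} λ_{i,k}(x_k(ω)) β_{i,k}(x_k(ω))(T_i(x_k(ω)) − x_k(ω)) ), with [k], β_{i,k}, α_k ∈ (0,2], r_k, φ_i, and λ_{i,k} as in the deterministic method, and assume: r_k → 0, Σ_k α_k r_k = ∞; for each bounded S ⊆ H there are 0 < δ ≤ Δ < ∞ with δ ≤ φ_i(x) ≤ Δ on S; and λ_{i,k}(x) ≥ λ > 0 for i ∈ I_k ∩ I_+(x) with weights summing to 1 over I_k. Then: (a) almost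 surely the realized control sequence {I_k(ω)}_{k=0}^∞ is well matched with C; and (b) if P({ω : {x_k(ω)} is bounded}) > 0, then P(∃ k : x_k(ω) ∈ C ∩ Q | {x_k(ω)} is bounded) = 1. -/

import Mathlib

open MeasureTheory
open scoped RealInnerProductSpace Classical

lemma aux_step {ι H : Type*} [NormedAddCommGroup H] [InnerProductSpace ℝ H]
    (s : Finset ι) (x z : H) (α ρ : ℝ) (hα0 : 0 < α) (hα2 : α ≤ 2)
    (lam b e c : ι → ℝ) (u : ι → H)
    (hlam0 : ∀ i ∈ s, 0 ≤ lam i) (hlamsum : ∑ i ∈ s, lam i ≤ 1)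
    (hb0 : ∀ i ∈ s, 0 ≤ b i)
    (hbz : ∀ i ∈ s, u i = 0 → b i = 0)
    (hbe : ∀ i ∈ s, u i ≠ 0 → b i = ‖u i‖ + e i)
    (hc : ∀ i ∈ s, u i ≠ 0 → c i = lam i * (b i / ‖u i‖))
    (hinner : ∀ i ∈ s, u i ≠ 0 → ‖u i‖ * (‖u i‖ + ρ) ≤ ⟪u i, z - x⟫)
    {d : H} (hd : d = ∑ i ∈ s, c i • u i) :
    (∑ i ∈ s, lam i * b i * (‖u i‖ + ρ)) ≤ ⟪d, z - x⟫ ∧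
    ‖x + α • d - z‖ ^ 2 ≤ ‖x - z‖ ^ 2 - 2 * α * ∑ i ∈ s, lam i * b i * (ρ - e i) := by
  have hterm_norm : ∀ i ∈ s, ‖c i • u i‖ = lam i * b i := by
    intro i hi
    by_cases h : u i = 0
    · simp [h, hbz i hi h]
    · have hu : (0:ℝ) < ‖u i‖ := norm_pos_iff.mpr h
      have hcnn : 0 ≤ c i := by
        rw [hc i hi h]; exact mul_nonneg (hlam0 i hi) (div_nonneg (hb0 i hi) hu.le)
      rw [norm_smul, Real.norm_eq_abs, abs_of_nonneg hcnn, hc i hi h]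
      field_simp
  have hterm_inner : ∀ i ∈ s, lam i * b i * (‖u i‖ + ρ) ≤ ⟪c i • u i, z - x⟫ := by
    intro i hi
    by_cases h : u i = 0
    · simp [h, hbz i hi h]
    · have hu : (0:ℝ) < ‖u i‖ := norm_pos_iff.mpr h
      have hcnn : 0 ≤ c i := by
        rw [hc i hi h]; exact mul_nonneg (hlam0 i hi) (div_nonneg (hb0 i hi) hu.le)
      rw [real_inner_smul_left]
      have h1 : c i * (‖u i‖ * (‖u i‖ + ρ)) ≤ c i * ⟪u i, z - x⟫ :=
        mul_le_mul_of_nonneg_left (hinner i hi h) hcnn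
      refine le_trans (le_of_eq ?_) h1
      rw [hc i hi h]; field_simp
  have h1 : (∑ i ∈ s, lam i * b i * (‖u i‖ + ρ)) ≤ ⟪d, z - x⟫ := by
    rw [hd, sum_inner]
    exact Finset.sum_le_sum hterm_inner
  refine ⟨h1, ?_⟩
  have hlb_nn : ∀ i ∈ s, 0 ≤ lam i * b i := fun i hi =>
    mul_nonneg (hlam0 i hi) (hb0 i hi)
  have hnd : ‖d‖ ≤ ∑ i ∈ s, lam i * b i := by
    rw [hd]
    refine (norm_sum_le _ _).trans (le_of_eq ?_)
    exact Finset.sum_congr rfl hterm_norm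
  have hS0 : 0 ≤ ∑ i ∈ s, lam i * b i := Finset.sum_nonneg hlb_nn
  have hcs : (∑ i ∈ s, lam i * b i) ^ 2 ≤ ∑ i ∈ s, lam i * b i ^ 2 := by
    have hCS := Finset.sum_mul_sq_le_sq_mul_sq s (fun i => Real.sqrt (lam i))
      (fun i => Real.sqrt (lam i) * b i)
    have e1 : ∑ i ∈ s, Real.sqrt (lam i) * (Real.sqrt (lam i) * b i)
        = ∑ i ∈ s, lam i * b i := by
      refine Finset.sum_congr rfl fun i hi => ?_
      rw [← mul_assoc, Real.mul_self_sqrt (hlam0 i hi)]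
    have e2 : ∑ i ∈ s, (Real.sqrt (lam i)) ^ 2 = ∑ i ∈ s, lam i := by
      refine Finset.sum_congr rfl fun i hi => Real.sq_sqrt (hlam0 i hi)
    have e3 : ∑ i ∈ s, (Real.sqrt (lam i) * b i) ^ 2 = ∑ i ∈ s, lam i * b i ^ 2 := by
      refine Finset.sum_congr rfl fun i hi => ?_
      rw [mul_pow, Real.sq_sqrt (hlam0 i hi)]
    rw [e1, e2, e3] at hCS
    have hnn : 0 ≤ ∑ i ∈ s, lam i * b i ^ 2 :=
      Finset.sum_nonneg fun i hi => mul_nonneg (hlam0 i hi) (sq_nonneg _)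
    calc (∑ i ∈ s, lam i * b i) ^ 2 ≤ (∑ i ∈ s, lam i) * ∑ i ∈ s, lam i * b i ^ 2 := hCS
      _ ≤ 1 * ∑ i ∈ s, lam i * b i ^ 2 := mul_le_mul_of_nonneg_right hlamsum hnn
      _ = _ := one_mul _
  have expand : ‖x + α • d - z‖ ^ 2
      = ‖x - z‖ ^ 2 + 2 * (α * ⟪x - z, d⟫) + α ^ 2 * ‖d‖ ^ 2 := by
    have hxy : x + α • d - z = (x - z) + α • d := by abel
    rw [hxy, norm_add_sq_real, real_inner_smul_right, norm_smul, Real.norm_eq_abs,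
      mul_pow, sq_abs]
  have hxzd : ⟪x - z, d⟫ = -⟪d, z - x⟫ := by
    rw [real_inner_comm, show x - z = -(z - x) by abel, inner_neg_right]
  have hb2 : α ^ 2 * ‖d‖ ^ 2 ≤ 2 * α * ∑ i ∈ s, lam i * b i ^ 2 := by
    have hd2 : ‖d‖ ^ 2 ≤ ∑ i ∈ s, lam i * b i ^ 2 :=
      le_trans (pow_le_pow_left₀ (norm_nonneg d) hnd 2) hcs
    have hα2' : α ^ 2 ≤ 2 * α := by nlinarith
    have h0d : (0:ℝ) ≤ ‖d‖ ^ 2 := sq_nonneg _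
    nlinarith [sq_nonneg α]
  have hsum_eq : ∑ i ∈ s, lam i * b i * (ρ - e i)
      = (∑ i ∈ s, lam i * b i * (‖u i‖ + ρ)) - ∑ i ∈ s, lam i * b i ^ 2 := by
    rw [← Finset.sum_sub_distrib]
    refine Finset.sum_congr rfl fun i hi => ?_
    by_cases h : u i = 0
    · simp [hbz i hi h]
    · rw [hbe i hi h]; ring
  have h2 : 2 * (α * ⟪x - z, d⟫) ≤ -(2 * α * ∑ i ∈ s, lam i * b i * (‖u i‖ + ρ)) := by
    rw [hxzd]
    nlinarith [mul_le_mul_of_nonneg_left h1 hα0.le]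
  rw [expand, hsum_eq]
  nlinarith [h2, hb2]

set_option maxHeartbeats 1000000 in
lemma det {H : Type*} [NormedAddCommGroup H] [InnerProductSpace ℝ H] {I : Type*}
    (T : I → H → H)
    (hT : ∀ i, ∀ x z, T i z = z → ⟪x - T i x, z - T i x⟫ ≤ 0)
    (Q : Set H) (hQconvex : Convex ℝ Q)
    (PQ : H → H) (hPQmem : ∀ u, PQ u ∈ Q)
    (hPQmin : ∀ u, ∀ w ∈ Q, ‖PQ u - u‖ ≤ ‖w - u‖)
    (hint : (interior (⋂ i, {u | T i u = u}) ∩ Q).Nonempty)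
    (J : ℕ → Finset I)
    (lam : I → ℕ → H → ℝ) (hlam01 : ∀ i k u, 0 ≤ lam i k u ∧ lam i k u ≤ 1)
    (hlamsum : ∀ (k : ℕ) (u : H), ∑ i ∈ J k, lam i k u = 1)
    (α : ℕ → ℝ) (hα : ∀ k, 0 < α k ∧ α k ≤ 2)
    (r : ℕ → ℝ) (hrpos : ∀ k, 0 < r k)
    (hr0 : Filter.Tendsto r Filter.atTop (nhds 0))
    (hdiv : Filter.Tendsto (fun n => ∑ k ∈ Finset.range n, α k * r k)
      Filter.atTop Filter.atTop)
    (φ : I → H → ℝ) (hφpos : ∀ i u, 0 < φ i u)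
    (hφbd : ∀ S : Set H, Bornology.IsBounded S →
      ∃ δ Δ : ℝ, 0 < δ ∧ δ ≤ Δ ∧ ∀ i, ∀ u ∈ S, δ ≤ φ i u ∧ φ i u ≤ Δ)
    (lam0 : ℝ) (hlam0 : 0 < lam0)
    (hlamlb : ∀ (i : I) (k : ℕ) (u : H), i ∈ J k → T i u ≠ u → lam0 ≤ lam i k u)
    (x : ℕ → H) (cnt : ℕ → ℕ)
    (hx0Q : x 0 ∈ Q)
    (hcnt : ∀ k, cnt k = ((Finset.range k).filter (fun n => x n ≠ x (n + 1))).card)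
    (hxrec : ∀ k, x (k + 1) = PQ (x k + α (cnt k) •
      ∑ i ∈ J k,
        (lam i k (x k) *
          if T i (x k) ≠ x k then
            (r (cnt k) / φ i (x k) + ‖T i (x k) - x k‖) / ‖T i (x k) - x k‖
          else 0) • (T i (x k) - x k)))
    (hwm : ∀ u : H, u ∉ ⋂ i, {v | T i v = v} → {k : ℕ | ∃ i ∈ J k, T i u ≠ u}.Infinite)
    (hbd : Bornology.IsBounded (Set.range x)) :
    ∃ k, x k ∈ (⋂ i, {u | T i u = u}) ∩ Q := by
  by_contra hno
  push_neg at hno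
  obtain ⟨z, hzint, hzQ⟩ := hint
  obtain ⟨ε, hε0, hball⟩ := Metric.mem_nhds_iff.mp (mem_interior_iff_mem_nhds.mp hzint)
  set ρ := ε / 2 with hρdef
  have hρ0 : 0 < ρ := by rw [hρdef]; positivity
  have hCball : ∀ w ∈ Metric.closedBall z ρ, ∀ i, T i w = w := by
    intro w hw i
    have hw' : w ∈ ⋂ i, {u | T i u = u} :=
      hball (Metric.closedBall_subset_ball (by linarith) hw)
    simpa using Set.mem_iInter.mp hw' i
  have hproj : ∀ v, ∀ w ∈ Q, ⟪v - PQ v, w - PQ v⟫ ≤ 0 := by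
    intro v w hw
    have hPQv : PQ v ∈ Q := hPQmem v
    haveI : Nonempty Q := ⟨⟨PQ v, hPQv⟩⟩
    have hmin : ‖v - PQ v‖ = ⨅ w : Q, ‖v - (w : H)‖ := by
      apply le_antisymm
      · refine le_ciInf fun w' => ?_
        rw [norm_sub_rev]
        exact le_trans (hPQmin v w' w'.2) (le_of_eq (norm_sub_rev _ _))
      · exact ciInf_le ⟨0, by rintro a ⟨w', rfl⟩; exact norm_nonneg _⟩ (⟨PQ v, hPQv⟩ : Q)
    exact (norm_eq_iInf_iff_real_inner_le_zero hQconvex hPQv).mp hmin w hw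
  have hPQid : ∀ v ∈ Q, PQ v = v := by
    intro v hv
    have h1 : ‖PQ v - v‖ ≤ 0 := by simpa using hPQmin v v hv
    have h2 := le_antisymm h1 (norm_nonneg _)
    exact sub_eq_zero.mp (norm_eq_zero.mp h2)
  have hPQfej : ∀ v, ∀ w ∈ Q, ‖PQ v - w‖ ^ 2 ≤ ‖v - w‖ ^ 2 := by
    intro v w hw
    have hsplit : v - w = (v - PQ v) + (PQ v - w) := by abel
    rw [hsplit, norm_add_sq_real]
    have h1 : 0 ≤ ⟪v - PQ v, PQ v - w⟫ := by
      have h2 := hproj v w hw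
      have heq : ⟪v - PQ v, PQ v - w⟫ = -⟪v - PQ v, w - PQ v⟫ := by
        rw [show PQ v - w = -(w - PQ v) by abel, inner_neg_right]
      rw [heq]; linarith
    nlinarith [sq_nonneg ‖v - PQ v‖]
  have hxQ : ∀ k, x k ∈ Q := by
    intro k
    cases k with
    | zero => exact hx0Q
    | succ n => rw [hxrec n]; exact hPQmem _
  have hxC : ∀ k, x k ∉ ⋂ i, {u | T i u = u} := fun k hk => hno k ⟨hk, hxQ k⟩
  obtain ⟨δ, Δ, hδ0, hδΔ, hφrange⟩ := hφbd (Set.range x) hbd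
  have hΔ0 : 0 < Δ := lt_of_lt_of_le hδ0 hδΔ
  set u : ℕ → I → H := fun k i => T i (x k) - x k with hu
  set bb : ℕ → I → ℝ := fun k i =>
    if T i (x k) ≠ x k then ‖T i (x k) - x k‖ + r (cnt k) / φ i (x k) else 0 with hbb
  set ee : ℕ → I → ℝ := fun k i => r (cnt k) / φ i (x k) with hee
  set cc : ℕ → I → ℝ := fun k i =>
    lam i k (x k) *
      if T i (x k) ≠ x k then
        (r (cnt k) / φ i (x k) + ‖T i (x k) - x k‖) / ‖T i (x k) - x k‖
      else 0 with hcc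
  set dd : ℕ → H := fun k => ∑ i ∈ J k, cc k i • u k i with hdd
  have hxrec' : ∀ k, x (k + 1) = PQ (x k + α (cnt k) • dd k) := by
    intro k; rw [hxrec k]
  have hbbnn : ∀ k i, 0 ≤ bb k i := by
    intro k i
    simp only [hbb]
    split
    · have h1 := hrpos (cnt k); have h2 := hφpos i (x k); positivity
    · exact le_refl 0
  have step : ∀ k,
      ((∑ i ∈ J k, lam i k (x k) * bb k i * (‖u k i‖ + ρ)) ≤ ⟪dd k, z - x k⟫) ∧
      ‖x k + α (cnt k) • dd k - z‖ ^ 2 ≤ ‖x k - z‖ ^ 2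
        - 2 * α (cnt k) * ∑ i ∈ J k, lam i k (x k) * bb k i * (ρ - ee k i) := by
    intro k
    refine aux_step (J k) (x k) z (α (cnt k)) ρ (hα _).1 (hα _).2
      (fun i => lam i k (x k)) (bb k) (ee k) (cc k) (u k)
      (fun i _ => (hlam01 i k (x k)).1) (hlamsum k (x k)).le
      (fun i _ => hbbnn k i) ?_ ?_ ?_ ?_ rfl
    · intro i _ hui
      simp only [hu] at hui
      have hTi : T i (x k) = x k := sub_eq_zero.mp hui
      simp only [hbb]
      rw [if_neg (by simpa using hTi)]
    · intro i _ hui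
      have hTi : T i (x k) ≠ x k := by
        intro h; exact hui (by simp only [hu]; exact sub_eq_zero.mpr h)
      simp only [hbb, hee, hu]
      rw [if_pos hTi]
    · intro i _ hui
      have hTi : T i (x k) ≠ x k := by
        intro h; exact hui (by simp only [hu]; exact sub_eq_zero.mpr h)
      simp only [hcc, hbb, hu]
      rw [if_pos hTi, if_pos hTi]
      ring
    · intro i _ hui
      have hTi : T i (x k) ≠ x k := by
        intro h; exact hui (by simp only [hu]; exact sub_eq_zero.mpr h)
      have hun : (0:ℝ) < ‖u k i‖ := norm_pos_iff.mpr hui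
      set w := z - (ρ / ‖u k i‖) • u k i with hw
      have hwball : w ∈ Metric.closedBall z ρ := by
        rw [Metric.mem_closedBall, dist_eq_norm]
        have h1 : w - z = -((ρ / ‖u k i‖) • u k i) := by rw [hw]; abel
        rw [h1, norm_neg, norm_smul, Real.norm_eq_abs,
          abs_of_nonneg (div_nonneg hρ0.le (norm_nonneg _)),
          div_mul_cancel₀ _ hun.ne']
      have hfix : T i w = w := hCball w hwball i
      have hcut := hT i (x k) w hfix
      have h1 : ‖u k i‖ ^ 2 ≤ ⟪u k i, w - x k⟫ := by
        have hsplit : w - x k = (w - T i (x k)) + (T i (x k) - x k) := by abel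
        rw [hsplit, inner_add_right]
        have h2 : ⟪u k i, w - T i (x k)⟫ = -⟪x k - T i (x k), w - T i (x k)⟫ := by
          rw [show u k i = -(x k - T i (x k)) by simp only [hu]; abel, inner_neg_left]
        have h3 : ⟪u k i, T i (x k) - x k⟫ = ‖u k i‖ ^ 2 := by
          simp only [hu]
          exact real_inner_self_eq_norm_sq _
        rw [h2, h3]
        linarith
      have h2 : ⟪u k i, z - w⟫ = ρ * ‖u k i‖ := by
        have h3 : z - w = (ρ / ‖u k i‖) • u k i := by rw [hw]; abel
        rw [h3, real_inner_smul_right, real_inner_self_eq_norm_sq]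
        field_simp
      have h4 : z - x k = (w - x k) + (z - w) := by abel
      rw [h4, inner_add_right, h2]
      nlinarith
  have key1 : ∀ k, (∃ i ∈ J k, T i (x k) ≠ x k) → x (k + 1) ≠ x k := by
    intro k hk heq
    obtain ⟨i0, hi0J, hi0⟩ := hk
    have hu0 : u k i0 ≠ 0 := by
      simp only [hu]; exact sub_ne_zero.mpr hi0
    have hpos : 0 < ⟪dd k, z - x k⟫ := by
      refine lt_of_lt_of_le ?_ (step k).1
      refine Finset.sum_pos' ?_ ⟨i0, hi0J, ?_⟩
      · intro i hi
        have := norm_nonneg (u k i)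
        have := (hlam01 i k (x k)).1
        have := hbbnn k i
        positivity
      · have hl : lam0 ≤ lam i0 k (x k) := hlamlb i0 k (x k) hi0J hi0
        have hbpos : 0 < bb k i0 := by
          simp only [hbb]
          rw [if_pos hi0]
          have h1 := hrpos (cnt k); have h2 := hφpos i0 (x k)
          positivity
        have hn := norm_nonneg (u k i0)
        have : 0 < lam i0 k (x k) := lt_of_lt_of_le hlam0 hl
        positivity
    have hchar := hproj (x k + α (cnt k) • dd k) z hzQ
    rw [← hxrec' k, heq] at hchar
    have h5 : x k + α (cnt k) • dd k - x k = α (cnt k) • dd k := by abel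
    rw [h5, real_inner_smul_left] at hchar
    nlinarith [(hα (cnt k)).1]
  have key2 : ∀ k, (∀ i ∈ J k, T i (x k) = x k) → x (k + 1) = x k := by
    intro k hk
    have hd0 : dd k = 0 := by
      rw [hdd]
      refine Finset.sum_eq_zero fun i hi => ?_
      have : u k i = 0 := by simp only [hu]; exact sub_eq_zero.mpr (hk i hi)
      rw [this, smul_zero]
    rw [hxrec' k, hd0, smul_zero, add_zero, hPQid _ (hxQ k)]
  have key3 : ∀ k, (∃ i ∈ J k, T i (x k) ≠ x k) → r (cnt k) ≤ δ * ρ / 2 →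
      ‖x (k + 1) - z‖ ^ 2 ≤ ‖x k - z‖ ^ 2 - lam0 * ρ / Δ * (α (cnt k) * r (cnt k)) := by
    intro k hk hrk
    obtain ⟨i0, hi0J, hi0⟩ := hk
    have hx_mem : x k ∈ Set.range x := ⟨k, rfl⟩
    have heub : ∀ i, ee k i ≤ ρ / 2 := by
      intro i
      have hφi := hφrange i _ hx_mem
      simp only [hee]
      have h1 : r (cnt k) / φ i (x k) ≤ r (cnt k) / δ := by
        gcongr
        · exact (hrpos _).le
        · exact hφi.1
      have h2 : r (cnt k) / δ ≤ ρ / 2 := by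
        rw [div_le_iff₀ hδ0]
        nlinarith
      linarith
    have hterm_nn : ∀ i ∈ J k, 0 ≤ lam i k (x k) * bb k i * (ρ - ee k i) := by
      intro i hi
      have h1 := heub i
      have h2 := (hlam01 i k (x k)).1
      have h3 := hbbnn k i
      have h4 : 0 ≤ ρ - ee k i := by linarith
      positivity
    have hS : lam0 * (r (cnt k) / Δ) * (ρ / 2)
        ≤ ∑ i ∈ J k, lam i k (x k) * bb k i * (ρ - ee k i) := by
      have hφi0 := hφrange i0 _ hx_mem
      have hterm_i0 : lam0 * (r (cnt k) / Δ) * (ρ / 2)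
          ≤ lam i0 k (x k) * bb k i0 * (ρ - ee k i0) := by
        have hl : lam0 ≤ lam i0 k (x k) := hlamlb i0 k (x k) hi0J hi0
        have hbbge : r (cnt k) / Δ ≤ bb k i0 := by
          simp only [hbb]
          rw [if_pos hi0]
          have h1 : r (cnt k) / Δ ≤ r (cnt k) / φ i0 (x k) := by
            gcongr
            · exact (hrpos _).le
            · exact hφpos i0 (x k)
            · exact hφi0.2
          have h2 := norm_nonneg (T i0 (x k) - x k)
          linarith
        have hρ2 : ρ / 2 ≤ ρ - ee k i0 := by linarith [heub i0]
        have hrΔ : 0 ≤ r (cnt k) / Δ := div_nonneg (hrpos _).le hΔ0.le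
        have h5 : lam0 * (r (cnt k) / Δ) ≤ lam i0 k (x k) * bb k i0 :=
          mul_le_mul hl hbbge hrΔ (le_trans hlam0.le hl)
        refine mul_le_mul h5 hρ2 (by linarith) ?_
        exact mul_nonneg (le_trans hlam0.le hl) (hbbnn k i0)
      exact le_trans hterm_i0 (Finset.single_le_sum hterm_nn hi0J)
    have hstep := (step k).2
    have hfej := hPQfej (x k + α (cnt k) • dd k) z hzQ
    rw [← hxrec' k] at hfej
    have hα0 := (hα (cnt k)).1
    have h6 : 2 * α (cnt k) * (lam0 * (r (cnt k) / Δ) * (ρ / 2))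
        ≤ 2 * α (cnt k) * ∑ i ∈ J k, lam i k (x k) * bb k i * (ρ - ee k i) := by
      apply mul_le_mul_of_nonneg_left hS (by positivity)
    have h7 : 2 * α (cnt k) * (lam0 * (r (cnt k) / Δ) * (ρ / 2))
        = lam0 * ρ / Δ * (α (cnt k) * r (cnt k)) := by ring
    linarith
  have hcnt_succ : ∀ k, cnt (k + 1) = if x k ≠ x (k + 1) then cnt k + 1 else cnt k := by
    intro k
    rw [hcnt (k + 1), hcnt k, Finset.range_add_one, Finset.filter_insert]
    by_cases h : x k ≠ x (k + 1)
    · rw [if_pos h, if_pos h, Finset.card_insert_of_notMem (by simp)]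
    · rw [if_neg h, if_neg h]
  have hcnt_mono : Monotone cnt := by
    apply monotone_nat_of_le_succ
    intro k
    rw [hcnt_succ k]
    split <;> omega
  have hinfact : ∀ n, ∃ k, n ≤ k ∧ (∃ i ∈ J k, T i (x k) ≠ x k) := by
    intro n
    by_contra hcon
    push_neg at hcon
    have hconst : ∀ m, x (n + m) = x n := by
      intro m
      induction m with
      | zero => rfl
      | succ m ih =>
        have h1 : x ((n + m) + 1) = x (n + m) := by
          apply key2
          intro i hi
          by_contra hne
          exact hne (hcon (n + m) (by omega) i hi)
        rw [show n + (m + 1) = (n + m) + 1 from rfl, h1, ih]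
    have hinf := hwm (x n) (hxC n)
    obtain ⟨k, hkmem, hkgt⟩ := hinf.exists_gt n
    have hxk : x k = x n := by
      obtain ⟨m, rfl⟩ : ∃ m, k = n + m := ⟨k - n, by omega⟩
      exact hconst m
    obtain ⟨i, hiJ, hiT⟩ := hkmem
    have : T i (x k) = x k := hcon k (le_of_lt hkgt) i hiJ
    rw [hxk] at this
    exact hiT this
  have hcnt_unbd : ∀ N, ∃ K, N ≤ cnt K := by
    intro N
    induction N with
    | zero => exact ⟨0, Nat.zero_le _⟩
    | succ N ih =>
      obtain ⟨K, hK⟩ := ih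
      obtain ⟨k, hkK, hact⟩ := hinfact K
      refine ⟨k + 1, ?_⟩
      have h1 : x k ≠ x (k + 1) := fun h => key1 k hact h.symm
      rw [hcnt_succ k, if_pos h1]
      have h2 := hcnt_mono hkK
      omega
  obtain ⟨N0, hN0⟩ : ∃ N0, ∀ n, N0 ≤ n → r n ≤ δ * ρ / 2 := by
    obtain ⟨N0, hN0⟩ := (Metric.tendsto_atTop.mp hr0) (δ * ρ / 2) (by positivity)
    refine ⟨N0, fun n hn => ?_⟩
    have := hN0 n hn
    rw [Real.dist_eq, sub_zero] at this
    exact le_of_lt (lt_of_le_of_lt (le_abs_self _) this)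
  obtain ⟨K0, hK0⟩ := hcnt_unbd N0
  set c0 := lam0 * ρ / Δ with hc0
  have hc0pos : 0 < c0 := by rw [hc0]; positivity
  have tel : ∀ m, ‖x (K0 + m) - z‖ ^ 2
      + c0 * ∑ n ∈ Finset.Ico (cnt K0) (cnt (K0 + m)), α n * r n ≤ ‖x K0 - z‖ ^ 2 := by
    intro m
    induction m with
    | zero => simp
    | succ m ih =>
      have hmono : cnt K0 ≤ cnt (K0 + m) := hcnt_mono (by omega)
      have hN : N0 ≤ cnt (K0 + m) := le_trans hK0 hmono
      by_cases hactk : ∃ i ∈ J (K0 + m), T i (x (K0 + m)) ≠ x (K0 + m)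
      · have hne : x (K0 + m) ≠ x (K0 + m + 1) := fun h => key1 (K0 + m) hactk h.symm
        have hcnt1 : cnt (K0 + m + 1) = cnt (K0 + m) + 1 := by
          rw [hcnt_succ (K0 + m), if_pos hne]
        have hdesc := key3 (K0 + m) hactk (hN0 _ hN)
        have hsum : ∑ n ∈ Finset.Ico (cnt K0) (cnt (K0 + m + 1)), α n * r n
            = (∑ n ∈ Finset.Ico (cnt K0) (cnt (K0 + m)), α n * r n)
              + α (cnt (K0 + m)) * r (cnt (K0 + m)) := by
          rw [hcnt1, Finset.sum_Ico_succ_top hmono]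
        rw [show K0 + (m + 1) = K0 + m + 1 from rfl, hsum]
        linarith [hdesc, ih]
      · push_neg at hactk
        have heq : x (K0 + m + 1) = x (K0 + m) := key2 (K0 + m) hactk
        have hne : ¬ x (K0 + m) ≠ x (K0 + m + 1) := by
          intro h; exact h heq.symm
        have hcnt1 : cnt (K0 + m + 1) = cnt (K0 + m) := by
          rw [hcnt_succ (K0 + m), if_neg hne]
        rw [show K0 + (m + 1) = K0 + m + 1 from rfl, hcnt1, heq]
        exact ih
  set B := ‖x K0 - z‖ ^ 2 with hB
  have hBnn : 0 ≤ B := sq_nonneg _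
  have hARnn : ∀ n, 0 ≤ α n * r n := fun n => (mul_pos (hα n).1 (hrpos n)).le
  obtain ⟨M, hM⟩ : ∃ M, B / c0 + ∑ n ∈ Finset.range (cnt K0), α n * r n
      < ∑ n ∈ Finset.range M, α n * r n := by
    obtain ⟨M, hM⟩ := (Filter.tendsto_atTop.mp hdiv
      (B / c0 + ∑ n ∈ Finset.range (cnt K0), α n * r n + 1)).exists
    exact ⟨M, by linarith⟩
  obtain ⟨K1, hK1⟩ := hcnt_unbd M
  have hK1' : M ≤ cnt (K0 + K1) := le_trans hK1 (hcnt_mono (by omega))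
  have htel := tel K1
  have hle : cnt K0 ≤ M := by
    by_contra h
    push_neg at h
    have hsub2 : ∑ n ∈ Finset.range M, α n * r n
        ≤ ∑ n ∈ Finset.range (cnt K0), α n * r n := by
      apply Finset.sum_le_sum_of_subset_of_nonneg
      · exact Finset.range_subset_range.mpr (by omega)
      · intro n _ _; exact hARnn n
    have hq : 0 ≤ B / c0 := div_nonneg hBnn hc0pos.le
    linarith
  have hsub : ∑ n ∈ Finset.Ico (cnt K0) M, α n * r n
      ≤ ∑ n ∈ Finset.Ico (cnt K0) (cnt (K0 + K1)), α n * r n := by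
    apply Finset.sum_le_sum_of_subset_of_nonneg
    · exact Finset.Ico_subset_Ico le_rfl hK1'
    · intro n _ _; exact hARnn n
  have hIco : ∑ n ∈ Finset.Ico (cnt K0) M, α n * r n
      = ∑ n ∈ Finset.range M, α n * r n - ∑ n ∈ Finset.range (cnt K0), α n * r n := by
    exact Finset.sum_Ico_eq_sub _ hle
  have hmain : c0 * ∑ n ∈ Finset.Ico (cnt K0) M, α n * r n ≤ B := by
    have h1 : c0 * ∑ n ∈ Finset.Ico (cnt K0) M, α n * r n
        ≤ c0 * ∑ n ∈ Finset.Ico (cnt K0) (cnt (K0 + K1)), α n * r n :=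
      mul_le_mul_of_nonneg_left hsub hc0pos.le
    have h2 : 0 ≤ ‖x (K0 + K1) - z‖ ^ 2 := sq_nonneg _
    linarith
  rw [hIco] at hmain
  have h3 : B / c0 < ∑ n ∈ Finset.range M, α n * r n
      - ∑ n ∈ Finset.range (cnt K0), α n * r n := by linarith
  have h4 := (div_lt_iff₀ hc0pos).mp h3
  nlinarith

open scoped ENNReal in

lemma wellmatched_core {I : Type*} [Countable I] {Ω : Type*} [MeasurableSpace Ω]
    (μ : Measure Ω) [IsProbabilityMeasure μ]
    (Ik : ℕ → Ω → Finset I)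
    (hmeas : ∀ (k : ℕ) (J : Finset I), MeasurableSet {ω | Ik k ω = J})
    (hident : ∀ (k n : ℕ) (J : Finset I), μ {ω | Ik k ω = J} = μ {ω | Ik n ω = J})
    (hindep : ∀ (K : Finset ℕ) (J : ℕ → Finset I),
      μ (⋂ k ∈ K, {ω | Ik k ω = J k}) = ∏ k ∈ K, μ {ω | Ik k ω = J k}) :
    ∃ W : Set Ω, MeasurableSet W ∧ μ W = 1 ∧
      ∀ ω ∈ W, ∀ S : Set I, 0 < μ {ω' | ∃ i ∈ Ik 0 ω', i ∈ S} →
        {k : ℕ | ∃ i ∈ Ik k ω, i ∈ S}.Infinite := by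
  classical
  set p : I → ℝ≥0∞ := fun i => μ {ω | i ∈ Ik 0 ω} with hp
  have heqiU : ∀ (i : I) (k : ℕ), {ω | i ∈ Ik k ω}
      = ⋃ J ∈ {J : Finset I | i ∈ J}, {ω | Ik k ω = J} := by
    intro i k
    ext ω
    simp only [Set.mem_setOf_eq, Set.mem_iUnion]
    constructor
    · intro h; exact ⟨Ik k ω, h, rfl⟩
    · rintro ⟨J, hiJ, hJ⟩; rw [hJ]; exact hiJ
  have hBmeas : ∀ (i : I) (k : ℕ), MeasurableSet {ω | i ∈ Ik k ω} := by
    intro i k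
    rw [heqiU i k]
    exact MeasurableSet.biUnion (Set.to_countable _) (fun J _ => hmeas k J)
  have hdisj : ∀ k, Set.PairwiseDisjoint {J : Finset I | True}
      (fun J => {ω | Ik k ω = J}) := by
    intro k J _ J' _ hne
    apply Set.disjoint_left.mpr
    intro ω h1 h2
    exact hne ((show Ik k ω = J from h1).symm.trans (show Ik k ω = J' from h2))
  have hBeq : ∀ (i : I) (k : ℕ), μ {ω | i ∈ Ik k ω} = p i := by
    intro i k
    have h1 : ∀ k' : ℕ, μ {ω | i ∈ Ik k' ω}
        = ∑' J : {J : Finset I | i ∈ J}, μ {ω | Ik k' ω = (J : Finset I)} := by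
      intro k'
      rw [heqiU i k']
      refine measure_biUnion (Set.to_countable _) ?_ (fun J _ => hmeas k' J)
      intro J _ J' _ hne
      apply Set.disjoint_left.mpr
      intro ω h1 h2
      exact hne ((show Ik k' ω = J from h1).symm.trans (show Ik k' ω = J' from h2))
    rw [hp]
    simp only
    rw [h1 k, h1 0]
    exact tsum_congr fun J => hident k 0 J
  set π : ℕ → Set (Set Ω) := fun k => {s | ∃ J : Finset I, s = {ω | Ik k ω = J}} with hπ
  have hπpi : ∀ k, IsPiSystem (π k) := by
    intro k s hs t ht hne
    obtain ⟨J, rfl⟩ := hs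
    obtain ⟨J', rfl⟩ := ht
    obtain ⟨ω, h1, h2⟩ := hne
    have hJJ : J = J' := (show Ik k ω = J from h1).symm.trans (show Ik k ω = J' from h2)
    subst hJJ
    exact ⟨J, by simp⟩
  set κ : ℕ → MeasurableSpace Ω := fun k => MeasurableSpace.generateFrom (π k) with hκ
  have hκle : ∀ k, κ k ≤ ‹MeasurableSpace Ω› := by
    intro k
    apply MeasurableSpace.generateFrom_le
    rintro s ⟨J, rfl⟩
    exact hmeas k J
  have hIndepSets : ProbabilityTheory.iIndepSets π μ := by
    rw [ProbabilityTheory.iIndepSets_iff]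
    intro K f hf
    choose Jf hJf using fun k (hk : k ∈ K) => hf k hk
    set Jg : ℕ → Finset I := fun k => if hk : k ∈ K then Jf k hk else ∅ with hJg
    have hfop : ∀ k ∈ K, f k = {ω | Ik k ω = Jg k} := by
      intro k hk
      rw [hJf k hk, hJg]
      simp only [dif_pos hk]
    calc μ (⋂ k ∈ K, f k) = μ (⋂ k ∈ K, {ω | Ik k ω = Jg k}) := by
          congr 1; exact Set.iInter₂_congr hfop
      _ = ∏ k ∈ K, μ {ω | Ik k ω = Jg k} := hindep K Jg
      _ = ∏ k ∈ K, μ (f k) := Finset.prod_congr rfl fun k hk => by rw [hfop k hk]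
  have hIndep : ProbabilityTheory.iIndep κ μ :=
    ProbabilityTheory.iIndepSets.iIndep hκle π hπpi (fun k => rfl) hIndepSets
  have hBκ : ∀ (i : I) (k : ℕ), MeasurableSet[κ k] {ω | i ∈ Ik k ω} := by
    intro i k
    rw [heqiU i k, hκ]
    exact MeasurableSet.biUnion (Set.to_countable _)
      (fun J _ => MeasurableSpace.measurableSet_generateFrom ⟨J, rfl⟩)
  have hprod : ∀ (i : I) (n m : ℕ), μ (⋂ k ∈ Finset.Ico n m, {ω | i ∈ Ik k ω}ᶜ)
      = ∏ k ∈ Finset.Ico n m, μ ({ω | i ∈ Ik k ω}ᶜ) := by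
    intro i n m
    exact ((ProbabilityTheory.iIndep_iff κ μ).mp hIndep) (Finset.Ico n m)
      (fun k _ => (hBκ i k).compl)
  have hcompl : ∀ (i : I) (k : ℕ), μ ({ω | i ∈ Ik k ω}ᶜ) = 1 - p i := by
    intro i k
    rw [prob_compl_eq_one_sub (hBmeas i k), hBeq i k]
  set Di : I → ℕ → Set Ω := fun i n => ⋂ k, ⋂ (_ : n ≤ k), {ω | i ∈ Ik k ω}ᶜ with hDi
  have hDimeas : ∀ i n, MeasurableSet (Di i n) := by
    intro i n
    exact MeasurableSet.iInter fun k => MeasurableSet.iInter fun _ => (hBmeas i k).compl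
  have hDi0 : ∀ i, 0 < p i → ∀ n, μ (Di i n) = 0 := by
    intro i hpi n
    have hub : ∀ m : ℕ, μ (Di i n) ≤ (1 - p i) ^ m := by
      intro m
      have hsub : Di i n ⊆ ⋂ k ∈ Finset.Ico n (n + m), {ω | i ∈ Ik k ω}ᶜ := by
        intro ω hω
        simp only [hDi, Set.mem_iInter] at hω ⊢
        intro k hk
        exact hω k (Finset.mem_Ico.mp hk).1
      refine le_trans (measure_mono hsub) ?_
      rw [hprod i n (n + m), Finset.prod_congr rfl (fun k _ => hcompl i k),
        Finset.prod_const, Nat.card_Ico, Nat.add_sub_cancel_left]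
    have hlt1 : (1 : ℝ≥0∞) - p i < 1 :=
      ENNReal.sub_lt_self ENNReal.one_ne_top one_ne_zero hpi.ne'
    have h0 := ENNReal.tendsto_pow_atTop_nhds_zero_of_lt_one hlt1
    have hle0 : μ (Di i n) ≤ 0 := ge_of_tendsto h0 (Filter.Eventually.of_forall hub)
    exact le_antisymm hle0 zero_le
  set BAD : Set Ω := ⋃ (i : I), ⋃ (_ : 0 < p i), ⋃ n, Di i n with hBAD
  have hBADmeas : MeasurableSet BAD := by
    refine MeasurableSet.iUnion fun i => MeasurableSet.iUnion fun hpi =>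
      MeasurableSet.iUnion fun n => hDimeas i n
  have hBAD0 : μ BAD = 0 := by
    rw [hBAD]
    exact measure_iUnion_null fun i => measure_iUnion_null fun hpi =>
      measure_iUnion_null fun n => hDi0 i hpi n
  refine ⟨BADᶜ, hBADmeas.compl, ?_, ?_⟩
  · rw [measure_compl hBADmeas (measure_ne_top μ _), hBAD0, measure_univ, tsub_zero]
  · intro ω hω S hS
    have hdecomp : {ω' | ∃ i ∈ Ik 0 ω', i ∈ S}
        = ⋃ J ∈ {J : Finset I | ∃ i ∈ J, i ∈ S}, {ω' | Ik 0 ω' = J} := by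
      ext ω'
      simp only [Set.mem_setOf_eq, Set.mem_iUnion]
      constructor
      · rintro ⟨i, hi, hiS⟩
        exact ⟨Ik 0 ω', ⟨i, hi, hiS⟩, rfl⟩
      · rintro ⟨J, ⟨i, hiJ, hiS⟩, hJ⟩
        refine ⟨i, ?_, hiS⟩
        rw [hJ]; exact hiJ
    have hexJ : ∃ J : Finset I, (∃ i ∈ J, i ∈ S) ∧ 0 < μ {ω' | Ik 0 ω' = J} := by
      by_contra hcon
      push_neg at hcon
      have hz : μ {ω' | ∃ i ∈ Ik 0 ω', i ∈ S} = 0 := by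
        rw [hdecomp]
        refine (measure_biUnion_null_iff (Set.to_countable _)).mpr ?_
        intro J hJ
        exact nonpos_iff_eq_zero.mp (hcon J hJ)
      rw [hz] at hS
      exact lt_irrefl 0 hS
    obtain ⟨J, ⟨i, hiJ, hiS⟩, hJpos⟩ := hexJ
    have hpi : 0 < p i := by
      refine lt_of_lt_of_le hJpos (measure_mono ?_)
      intro ω' hω'
      have hω'' : Ik 0 ω' = J := hω'
      show i ∈ Ik 0 ω'
      rw [hω'']; exact hiJ
    have hinf : ∀ n, ∃ k, n ≤ k ∧ i ∈ Ik k ω := by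
      intro n
      by_contra hcon2
      push_neg at hcon2
      apply hω
      refine Set.mem_iUnion.mpr ⟨i, Set.mem_iUnion.mpr ⟨hpi, Set.mem_iUnion.mpr ⟨n, ?_⟩⟩⟩
      simp only [hDi]
      refine Set.mem_iInter.mpr fun k => Set.mem_iInter.mpr fun hk => ?_
      intro hmem
      exact hcon2 k hk hmem
    have hsubset : {k : ℕ | i ∈ Ik k ω} ⊆ {k : ℕ | ∃ i' ∈ Ik k ω, i' ∈ S} :=
      fun k hk => ⟨i, hk, hiS⟩
    have hnb : ¬ BddAbove {k : ℕ | i ∈ Ik k ω} := by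
      rintro ⟨n, hn⟩
      obtain ⟨k, hk1, hk2⟩ := hinf (n + 1)
      have := hn hk2
      omega
    exact Set.Infinite.mono hsubset (Set.infinite_of_not_bddAbove hnb)

/-- Theorem 5.4 (stochastic main result): (a) almost surely the realized random control
sequence is well matched with `C`; (b) conditioned on boundedness of the iterates (an
event of positive probability), the iterates almost surely reach `C ∩ Q` in finitely
many steps. -/
theorem stmt16 {H : Type*} [NormedAddCommGroup H] [InnerProductSpace ℝ H] [CompleteSpace H]
    {I : Type*} [Countable I]
    {Ω : Type*} [MeasurableSpace Ω] (μ : Measure Ω) [IsProbabilityMeasure μ]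
    (T : I → H → H)
    (hfixne : ∀ i, ∃ z, T i z = z)
    (hT : ∀ i, ∀ x z, T i z = z → ⟪x - T i x, z - T i x⟫ ≤ 0)
    (Q : Set H) (hQne : Q.Nonempty) (hQclosed : IsClosed Q) (hQconvex : Convex ℝ Q)
    (PQ : H → H) (hPQmem : ∀ u, PQ u ∈ Q)
    (hPQmin : ∀ u, ∀ w ∈ Q, ‖PQ u - u‖ ≤ ‖w - u‖)
    -- (i) interior condition
    (hint : (interior (⋂ i, {u | T i u = u}) ∩ Q).Nonempty)
    -- the random control sequence
    (Ik : ℕ → Ω → Finset I)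
    (hIkne : ∀ k ω, (Ik k ω).Nonempty)
    (M : ℕ) (hIkM : ∀ k ω, (Ik k ω).card ≤ M)
    (hmeas : ∀ (k : ℕ) (J : Finset I), MeasurableSet {ω | Ik k ω = J})
    -- identically distributed
    (hident : ∀ (k n : ℕ) (J : Finset I), μ {ω | Ik k ω = J} = μ {ω | Ik n ω = J})
    -- independent
    (hindep : ∀ (K : Finset ℕ) (J : ℕ → Finset I),
      μ (⋂ k ∈ K, {ω | Ik k ω = J k}) = ∏ k ∈ K, μ {ω | Ik k ω = J k})
    -- positive probability of encountering a violated constraint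
    (hprob : ∀ u : H, u ∉ ⋂ i, {v | T i v = v} →
      ∀ k, 0 < μ {ω | ∃ i ∈ Ik k ω, T i u ≠ u})
    -- the weights
    (lam : I → ℕ → H → ℝ) (hlam01 : ∀ i k u, 0 ≤ lam i k u ∧ lam i k u ≤ 1)
    (hlamsum : ∀ (k : ℕ) (ω : Ω) (u : H), ∑ i ∈ Ik k ω, lam i k u = 1)
    -- relaxations and overrelaxations
    (α : ℕ → ℝ) (hα : ∀ k, 0 < α k ∧ α k ≤ 2)
    (r : ℕ → ℝ) (hrpos : ∀ k, 0 < r k)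
    (hr0 : Filter.Tendsto r Filter.atTop (nhds 0))
    (hdiv : Filter.Tendsto (fun n => ∑ k ∈ Finset.range n, α k * r k)
      Filter.atTop Filter.atTop)
    (φ : I → H → ℝ) (hφpos : ∀ i u, 0 < φ i u)
    (hφbd : ∀ S : Set H, Bornology.IsBounded S →
      ∃ δ Δ : ℝ, 0 < δ ∧ δ ≤ Δ ∧ ∀ i, ∀ u ∈ S, δ ≤ φ i u ∧ φ i u ≤ Δ)
    -- weights of violated constraints are bounded from below
    (lam0 : ℝ) (hlam0 : 0 < lam0)
    (hlamlb : ∀ (i : I) (k : ℕ) (ω : Ω) (u : H),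
      i ∈ Ik k ω → T i u ≠ u → lam0 ≤ lam i k u)
    -- the random iterates and the correction-step counters
    (x0 : H) (hx0Q : x0 ∈ Q)
    (x : Ω → ℕ → H) (cnt : Ω → ℕ → ℕ)
    (hx0 : ∀ ω, x ω 0 = x0)
    (hcnt : ∀ ω k, cnt ω k =
      ((Finset.range k).filter (fun n => x ω n ≠ x ω (n + 1))).card)
    (hxrec : ∀ ω k, x ω (k + 1) = PQ (x ω k + α (cnt ω k) •
      ∑ i ∈ Ik k ω,
        (lam i k (x ω k) *
          if T i (x ω k) ≠ x ω k then
            (r (cnt ω k) / φ i (x ω k) + ‖T i (x ω k) - x ω k‖) / ‖T i (x ω k) - x ω k‖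
          else 0) • (T i (x ω k) - x ω k))) :
    -- (a) almost surely the realized control sequence is well matched with C
    μ {ω | ∀ u : H, u ∉ ⋂ i, {v | T i v = v} →
        {k : ℕ | ∃ i ∈ Ik k ω, T i u ≠ u}.Infinite} = 1 ∧
    -- (b) conditional finite convergence given boundedness
    (0 < μ {ω | Bornology.IsBounded (Set.range (x ω))} →
      ProbabilityTheory.cond μ {ω | Bornology.IsBounded (Set.range (x ω))}
        {ω | ∃ k, x ω k ∈ (⋂ i, {u | T i u = u}) ∩ Q} = 1) := by
  obtain ⟨W, hWmeas, hW1, hWprop⟩ := wellmatched_core μ Ik hmeas hident hindep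
  have hWsub : W ⊆ {ω | ∀ u : H, u ∉ ⋂ i, {v | T i v = v} →
      {k : ℕ | ∃ i ∈ Ik k ω, T i u ≠ u}.Infinite} := by
    intro ω hω u hu
    exact hWprop ω hω {i | T i u ≠ u} (hprob u hu 0)
  constructor
  · refine le_antisymm prob_le_one ?_
    calc (1 : ENNReal) = μ W := hW1.symm
      _ ≤ _ := measure_mono hWsub
  · intro hpos
    set s := {ω | Bornology.IsBounded (Set.range (x ω))} with hs
    set t := {ω | ∃ k, x ω k ∈ (⋂ i, {u | T i u = u}) ∩ Q} with ht
    have hst : s ∩ W ⊆ t := by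
      rintro ω ⟨hωs, hωW⟩
      refine det T hT Q hQconvex PQ hPQmem hPQmin hint (fun k => Ik k ω)
        lam hlam01 (fun k u => hlamsum k ω u) α hα r hrpos hr0 hdiv φ hφpos hφbd
        lam0 hlam0 (fun i k u hi hTu => hlamlb i k ω u hi hTu)
        (x ω) (cnt ω) ?_ (hcnt ω) (hxrec ω) ?_ hωs
      · rw [hx0 ω]; exact hx0Q
      · intro u hu
        exact hWprop ω hωW {i | T i u ≠ u} (hprob u hu 0)
    have hWc0 : μ Wᶜ = 0 := by
      rw [prob_compl_eq_one_sub hWmeas, hW1, tsub_self]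
    have hrest : μ s ≤ μ.restrict s t := by
      have h1 : μ.restrict s s ≤ μ.restrict s (t ∪ Wᶜ) := by
        apply measure_mono
        intro ω hωs
        by_cases hω : ω ∈ W
        · exact Or.inl (hst ⟨hωs, hω⟩)
        · exact Or.inr hω
      have h2 : μ.restrict s (t ∪ Wᶜ) ≤ μ.restrict s t + μ.restrict s Wᶜ :=
        measure_union_le _ _
      have h3 : μ.restrict s Wᶜ ≤ μ Wᶜ :=
        Measure.le_iff'.mp (Measure.restrict_le_self) Wᶜ
      have h4 : μ.restrict s Wᶜ = 0 :=
        le_antisymm (hWc0 ▸ h3) zero_le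
      rw [Measure.restrict_apply_self] at h1
      calc μ s ≤ μ.restrict s t + μ.restrict s Wᶜ := le_trans h1 h2
        _ = μ.restrict s t := by rw [h4, add_zero]
    have hrest2 : μ.restrict s t ≤ μ s := by
      rw [← Measure.restrict_apply_univ s]
      exact measure_mono (Set.subset_univ t)
    have heq : μ.restrict s t = μ s := le_antisymm hrest2 hrest
    have hμs_ne : μ s ≠ 0 := hpos.ne'
    have hμs_fin : μ s ≠ ⊤ := measure_ne_top μ s
    show ((μ s)⁻¹ • μ.restrict s) t = 1
    rw [Measure.smul_apply, smul_eq_mul, heq]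
    exact ENNReal.inv_mul_cancel hμs_ne hμs_fin
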